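/- arXiv:2012.03687 — 2 statements merged into one kernel-verified Lean document; each statement's English description precedes it below -/
import Mathlib

section
/- Let H ∈ ℂ^{K×N} and define Q* = max over z ∈ ℂ^N with |z_n| = 1 for all n of ‖Hz‖². Let λ₁ be the largest eigenvalue of H^H H and v₁ a corresponding unit eigenvector. Then λ₁ ‖v₁‖₁² ≤ Q* ≤ N λ₁, where ‖v₁‖₁ = ∑_n |[v₁]_n|. -/
open Matrix

lemma quad_re_eq {K N : ℕ} (H : Matrix (Fin K) (Fin N) ℂ) (z : Fin N → ℂ) :
    star z ⬝ᵥ (Hᴴ * H).mulVec z = ((∑ k, ‖H.mulVec z k‖ ^ 2 : ℝ) : ℂ) := by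
  rw [← Matrix.mulVec_mulVec, Matrix.dotProduct_mulVec, ← Matrix.star_mulVec]
  push_cast
  simp [dotProduct, Pi.star_apply, Complex.conj_mul', ← Complex.sq_norm]

/-- Bounds on `Q* = max_{|z_n|=1} ‖Hz‖²`: `λ₁‖v₁‖₁² ≤ Q* ≤ Nλ₁`, where `λ₁` is the
largest eigenvalue of `HᴴH` and `v₁` a corresponding unit eigenvector. -/
theorem unit_modulus_max_bounds {K N : ℕ}
    (H : Matrix (Fin K) (Fin N) ℂ) (lam : ℝ) (v1 : Fin N → ℂ)
    (heig : (Hᴴ * H).mulVec v1 = (lam : ℂ) • v1)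
    (hunit : ∑ n, ‖v1 n‖ ^ 2 = 1)
    (hmax : ∀ z : Fin N → ℂ,
      (star z ⬝ᵥ (Hᴴ * H).mulVec z).re ≤ lam * ∑ n, ‖z n‖ ^ 2)
    (Q : ℝ)
    (hQ : IsGreatest {q : ℝ | ∃ z : Fin N → ℂ, (∀ n, ‖z n‖ = 1) ∧
        q = ∑ k, ‖H.mulVec z k‖ ^ 2} Q) :
    lam * (∑ n, ‖v1 n‖) ^ 2 ≤ Q ∧ Q ≤ N * lam := by
  constructor
  · -- lower bound
    set c : ℝ := ∑ n, ‖v1 n‖ with hcdef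
    set z0 : Fin N → ℂ := fun n => if v1 n = 0 then 1 else (↑(‖v1 n‖))⁻¹ * v1 n
      with hz0def
    have hz0 : ∀ n, ‖z0 n‖ = 1 := by
      intro n
      by_cases h : v1 n = 0
      · simp [hz0def, h]
      · simp only [hz0def, h, if_false, norm_mul, norm_inv, Complex.norm_real,
          norm_norm]
        exact inv_mul_cancel₀ (norm_ne_zero_iff.mpr h)
    have hvv : star v1 ⬝ᵥ v1 = 1 := by
      have : star v1 ⬝ᵥ v1 = ((∑ n, ‖v1 n‖ ^ 2 : ℝ) : ℂ) := by
        push_cast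
        simp [dotProduct, Pi.star_apply, Complex.conj_mul', ← Complex.sq_norm]
      rw [this, hunit, Complex.ofReal_one]
    have hc : star v1 ⬝ᵥ z0 = (c : ℂ) := by
      rw [hcdef]
      push_cast
      rw [dotProduct]
      refine Finset.sum_congr rfl fun n _ => ?_
      by_cases h : v1 n = 0
      · simp [hz0def, h]
      · simp only [hz0def, h, if_false, Pi.star_apply, RCLike.star_def]
        rw [mul_comm ((↑(‖v1 n‖))⁻¹) (v1 n), ← mul_assoc, mul_comm _ (v1 n),
          Complex.mul_conj]
        rw [Complex.normSq_eq_norm_sq]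
        have ha : (‖v1 n‖ : ℂ) ≠ 0 := by
          exact_mod_cast norm_ne_zero_iff.mpr h
        push_cast
        field_simp
    set w : Fin N → ℂ := z0 - (c : ℂ) • v1 with hwdef
    have hz0w : z0 = (c : ℂ) • v1 + w := by simp [hwdef]
    have hvw : star v1 ⬝ᵥ w = 0 := by
      simp [hwdef, dotProduct_sub, dotProduct_smul, hvv, hc, smul_eq_mul]
    have hGH : (Hᴴ * H)ᴴ = Hᴴ * H := by
      rw [conjTranspose_mul, conjTranspose_conjTranspose]
    have hrow : star v1 ᵥ* (Hᴴ * H) = (lam : ℂ) • star v1 := by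
      conv_lhs => rw [← hGH]
      rw [← Matrix.star_mulVec, heig]
      simp [star_smul, Complex.star_def, Complex.conj_ofReal]
    have h1 : star v1 ⬝ᵥ (Hᴴ * H) *ᵥ w = 0 := by
      rw [Matrix.dotProduct_mulVec, hrow, smul_dotProduct, hvw, smul_zero]
    have hwv : star w ⬝ᵥ v1 = 0 := by
      have h := congrArg star hvw
      rw [star_zero] at h
      rw [← h]
      simp [dotProduct, star_sum, star_mul', mul_comm]
    have h2 : star w ⬝ᵥ (Hᴴ * H) *ᵥ v1 = 0 := by
      rw [heig, dotProduct_smul, hwv, smul_zero]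
    have h3 : star v1 ⬝ᵥ (Hᴴ * H) *ᵥ v1 = (lam : ℂ) := by
      rw [heig, dotProduct_smul, hvv, smul_eq_mul, mul_one]
    have hexp : star z0 ⬝ᵥ (Hᴴ * H) *ᵥ z0
        = (c : ℂ) * (c : ℂ) * (lam : ℂ) + star w ⬝ᵥ (Hᴴ * H) *ᵥ w := by
      conv_lhs => rw [hz0w]
      simp only [star_add, star_smul, Matrix.mulVec_add, Matrix.mulVec_smul,
        add_dotProduct, dotProduct_add, smul_dotProduct, dotProduct_smul,
        h1, h2, h3, smul_zero, add_zero, zero_add]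
      simp only [Complex.star_def, Complex.conj_ofReal, smul_eq_mul]
      ring
    have hmain : ((∑ k, ‖H.mulVec z0 k‖ ^ 2 : ℝ) : ℂ)
        = ((c ^ 2 * lam + ∑ k, ‖H.mulVec w k‖ ^ 2 : ℝ) : ℂ) := by
      rw [← quad_re_eq, hexp, quad_re_eq]
      push_cast
      ring
    have hmainR : (∑ k, ‖H.mulVec z0 k‖ ^ 2 : ℝ)
        = c ^ 2 * lam + ∑ k, ‖H.mulVec w k‖ ^ 2 :=
      Complex.ofReal_inj.mp hmain
    have hnn : (0:ℝ) ≤ ∑ k, ‖H.mulVec w k‖ ^ 2 :=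
      Finset.sum_nonneg fun k _ => sq_nonneg _
    have hle : lam * c ^ 2 ≤ ∑ k, ‖H.mulVec z0 k‖ ^ 2 := by
      rw [hmainR]; linarith
    exact le_trans hle (hQ.2 ⟨z0, hz0, rfl⟩)
  · -- upper bound
    obtain ⟨z, hz, hq⟩ := hQ.1
    have h1 : Q = (star z ⬝ᵥ (Hᴴ * H).mulVec z).re := by
      rw [quad_re_eq, Complex.ofReal_re, hq]
    rw [h1]
    calc (star z ⬝ᵥ (Hᴴ * H).mulVec z).re ≤ lam * ∑ n, ‖z n‖ ^ 2 := hmax z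
      _ = N * lam := by simp [hz, mul_comm]
end

section
/- For independent random variables e_1, …, e_N each uniform on [−π/2^b, π/2^b] and nonnegative reals l_1, …, l_N, E[|∑_{n=1}^N l_n e^{j e_n}|²] = ∑_n l_n² + (2^{2b}/π²) sin²(π/2^b) · ∑_{n≠i} l_n l_i, and in particular E[|∑_n l_n e^{j e_n}|²] ≥ (2^{2b}/π²) sin²(π/2^b) · (∑_n l_n)². -/
open MeasureTheory Real

lemma myprob (a : ℝ) (ha : 0 < a) :
    IsProbabilityMeasure ((volume (Set.Icc (-a) a))⁻¹ • volume.restrict (Set.Icc (-a) a)) := by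
  constructor
  rw [Measure.smul_apply, Measure.restrict_apply MeasurableSet.univ, Set.univ_inter, smul_eq_mul,
    ENNReal.inv_mul_cancel]
  · simp [Real.volume_Icc]
    linarith
  · exact measure_Icc_lt_top.ne

lemma myint_cos (a : ℝ) (ha : 0 < a) :
    ∫ x, Real.cos x ∂((volume (Set.Icc (-a) a))⁻¹ • volume.restrict (Set.Icc (-a) a)) =
      Real.sin a / a := by
  rw [integral_smul_measure, MeasureTheory.integral_Icc_eq_integral_Ioc,
    ← intervalIntegral.integral_of_le (by linarith : -a ≤ a), integral_cos]
  rw [Real.volume_Icc, Real.sin_neg]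
  rw [← ENNReal.ofReal_inv_of_pos (by linarith), ENNReal.toReal_ofReal (by rw [inv_nonneg]; linarith)]
  field_simp
  ring_nf
  rw [mul_comm a, mul_assoc, mul_inv_cancel₀ ha.ne', mul_one]

lemma myint_sin (a : ℝ) (ha : 0 < a) :
    ∫ x, Real.sin x ∂((volume (Set.Icc (-a) a))⁻¹ • volume.restrict (Set.Icc (-a) a)) = 0 := by
  rw [integral_smul_measure, MeasureTheory.integral_Icc_eq_integral_Ioc,
    ← intervalIntegral.integral_of_le (by linarith : -a ≤ a), integral_sin]
  simp [Real.cos_neg]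

lemma myprod_ite_two {N : ℕ} {n m : Fin N} (hnm : n ≠ m) (A B : Fin N → ℝ) :
    ∏ i, (if i = n then A i else if i = m then B i else 1) = A n * B m := by
  rw [← Finset.prod_subset (Finset.subset_univ ({n, m} : Finset (Fin N)))
    (by intro i _ hi; simp only [Finset.mem_insert, Finset.mem_singleton, not_or] at hi
        simp [hi.1, hi.2])]
  rw [Finset.prod_pair hnm]
  simp [hnm, Ne.symm hnm]

lemma mypi_prod {N : ℕ} (μ : Measure ℝ) [SigmaFinite μ] (f : Fin N → ℝ → ℝ) :
    ∫ x : Fin N → ℝ, ∏ i, f i (x i) ∂(Measure.pi fun _ => μ) = ∏ i, ∫ x, f i x ∂μ := by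
  letI : MeasureSpace ℝ := ⟨μ⟩
  exact MeasureTheory.integral_fin_nat_prod_eq_prod f

lemma mypi_two {N : ℕ} (μ : Measure ℝ) [SigmaFinite μ] [IsProbabilityMeasure μ]
    {n m : Fin N} (hnm : n ≠ m) (f g : ℝ → ℝ) :
    ∫ x : Fin N → ℝ, f (x n) * g (x m) ∂(Measure.pi fun _ => μ) =
      (∫ x, f x ∂μ) * (∫ x, g x ∂μ) := by
  have h1 : ∀ x : Fin N → ℝ, f (x n) * g (x m) =
      ∏ i, (if i = n then f (x i) else if i = m then g (x i) else 1) := by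
    intro x
    rw [myprod_ite_two hnm (fun i => f (x i)) (fun i => g (x i))]
  simp_rw [h1]
  rw [mypi_prod μ (fun i y => if i = n then f y else if i = m then g y else 1)]
  rw [← myprod_ite_two hnm (fun _ => ∫ x, f x ∂μ) (fun _ => ∫ x, g x ∂μ)]
  refine Finset.prod_congr rfl fun i _ => ?_
  split_ifs <;> simp

lemma myintegrand {N : ℕ} (l : Fin N → ℝ) (x : Fin N → ℝ) :
    ‖∑ n, (l n : ℂ) * Complex.exp (Complex.I * x n)‖ ^ 2 =
      ∑ p : Fin N × Fin N, l p.1 * l p.2 * Real.cos (x p.1 - x p.2) := by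
  rw [Complex.sq_norm, Complex.normSq_apply, Complex.re_sum, Complex.im_sum]
  have hre : ∀ n, ((l n : ℂ) * Complex.exp (Complex.I * x n)).re = l n * Real.cos (x n) := by
    intro n
    simp [Complex.exp_re, Complex.exp_im, Complex.mul_re, Complex.mul_im]
  have him : ∀ n, ((l n : ℂ) * Complex.exp (Complex.I * x n)).im = l n * Real.sin (x n) := by
    intro n
    simp [Complex.exp_re, Complex.exp_im, Complex.mul_re, Complex.mul_im]
  simp_rw [hre, him, Finset.sum_mul_sum, Fintype.sum_prod_type, Real.cos_sub]
  rw [← Finset.sum_add_distrib]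
  refine Finset.sum_congr rfl fun n _ => ?_
  rw [← Finset.sum_add_distrib]
  refine Finset.sum_congr rfl fun m _ => ?_
  ring

/-- For independent `e_1,…,e_N` uniform on `[−π/2^b, π/2^b]` and nonnegative `l_n`,
`E[|∑_n l_n e^{je_n}|²] = ∑_n l_n² + c ∑_{n≠i} l_n l_i` with
`c = (2^{2b}/π²) sin²(π/2^b)`, and consequently `E[…] ≥ c (∑_n l_n)²`. -/
theorem quantized_coherent_sum_power (b : ℕ) (hb : 0 < b) {N : ℕ}
    (l : Fin N → ℝ) (hl : ∀ n, 0 ≤ l n) :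
    let I : Set ℝ := Set.Icc (-(π / 2 ^ b)) (π / 2 ^ b)
    let μ : Measure ℝ := (volume I)⁻¹ • volume.restrict I
    let c : ℝ := 2 ^ (2 * b) / π ^ 2 * Real.sin (π / 2 ^ b) ^ 2
    (∫ x : Fin N → ℝ, ‖∑ n, (l n : ℂ) * Complex.exp (Complex.I * x n)‖ ^ 2
        ∂(Measure.pi fun _ => μ) =
      ∑ n, l n ^ 2 + c * ∑ p : Fin N × Fin N, if p.1 ≠ p.2 then l p.1 * l p.2 else 0) ∧
    (∫ x : Fin N → ℝ, ‖∑ n, (l n : ℂ) * Complex.exp (Complex.I * x n)‖ ^ 2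
        ∂(Measure.pi fun _ => μ) ≥ c * (∑ n, l n) ^ 2) := by
  intro I μ c
  have ha : 0 < π / 2 ^ b := by positivity
  haveI hpm : IsProbabilityMeasure μ := myprob _ ha
  haveI : SigmaFinite μ := inferInstance
  -- value of c
  have h2b : (2 : ℝ) ^ (2 * b) = ((2 : ℝ) ^ b) ^ 2 := by rw [mul_comm, pow_mul]
  have hπ : π ≠ 0 := Real.pi_ne_zero
  have h2bne : ((2 : ℝ) ^ b) ≠ 0 := by positivity
  have hc : c = (Real.sin (π / 2 ^ b) / (π / 2 ^ b)) ^ 2 := by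
    show (2:ℝ) ^ (2*b) / π ^ 2 * Real.sin (π / 2 ^ b) ^ 2 = _
    rw [div_pow, h2b]
    field_simp
  -- integrability of cosine-difference terms
  have hint : ∀ p : Fin N × Fin N,
      Integrable (fun x : Fin N → ℝ => l p.1 * l p.2 * Real.cos (x p.1 - x p.2))
        (Measure.pi fun _ => μ) := by
    intro p
    refine Integrable.const_mul ?_ _
    refine (integrable_const (1 : ℝ)).mono' ?_ (Filter.Eventually.of_forall fun x => ?_)
    · exact (((measurable_pi_apply p.1).sub (measurable_pi_apply p.2)).cos).aestronglyMeasurable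
    · simpa using Real.abs_cos_le_one _
  have hint2 : ∀ (f g : ℝ → ℝ), Measurable f → Measurable g → (∀ y, |f y| ≤ 1) → (∀ y, |g y| ≤ 1) →
      ∀ n m : Fin N, Integrable (fun x : Fin N → ℝ => f (x n) * g (x m))
        (Measure.pi fun _ => μ) := by
    intro f g hf hg hbf hbg n m
    refine (integrable_const (1 : ℝ)).mono' ?_ (Filter.Eventually.of_forall fun x => ?_)
    · exact ((hf.comp (measurable_pi_apply n)).mul (hg.comp (measurable_pi_apply m))).aestronglyMeasurable
    · simp only [norm_mul, Real.norm_eq_abs]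
      exact mul_le_one₀ (hbf _) (abs_nonneg _) (hbg _)
  -- per-term integrals
  have hterm : ∀ p : Fin N × Fin N,
      ∫ x : Fin N → ℝ, l p.1 * l p.2 * Real.cos (x p.1 - x p.2) ∂(Measure.pi fun _ => μ) =
        if p.1 = p.2 then l p.1 ^ 2 else c * (l p.1 * l p.2) := by
    intro p
    rcases eq_or_ne p.1 p.2 with h | h
    · simp [h, sq, measure_univ]
    · simp only [h, if_neg h, if_false]
      simp_rw [Real.cos_sub, mul_add]
      rw [integral_add ((hint2 _ _ Real.measurable_cos Real.measurable_cos
            (fun y => Real.abs_cos_le_one y) (fun y => Real.abs_cos_le_one y) p.1 p.2).const_mul _)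
          ((hint2 _ _ Real.measurable_sin Real.measurable_sin
            (fun y => Real.abs_sin_le_one y) (fun y => Real.abs_sin_le_one y) p.1 p.2).const_mul _),
        integral_const_mul, integral_const_mul, mypi_two μ h, mypi_two μ h,
        myint_cos _ ha, myint_sin _ ha, hc]
      ring
  -- main equality
  have key : ∫ x : Fin N → ℝ,
      ‖∑ n, (l n : ℂ) * Complex.exp (Complex.I * x n)‖ ^ 2
        ∂(Measure.pi fun _ => μ) =
      ∑ p : Fin N × Fin N, (if p.1 = p.2 then l p.1 ^ 2 else c * (l p.1 * l p.2)) := by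
    simp_rw [myintegrand l]
    rw [integral_finset_sum _ (fun p _ => hint p)]
    exact Finset.sum_congr rfl fun p _ => hterm p
  have hsplit : ∑ p : Fin N × Fin N, (if p.1 = p.2 then l p.1 ^ 2 else c * (l p.1 * l p.2)) =
      ∑ n, l n ^ 2 + c * ∑ p : Fin N × Fin N, (if p.1 ≠ p.2 then l p.1 * l p.2 else 0) := by
    have hpt : ∀ p : Fin N × Fin N,
        (if p.1 = p.2 then l p.1 ^ 2 else c * (l p.1 * l p.2)) =
          (if p.1 = p.2 then l p.1 ^ 2 else 0) + c * (if p.1 ≠ p.2 then l p.1 * l p.2 else 0) := by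
      intro p; rcases eq_or_ne p.1 p.2 with h | h <;> simp [h]
    simp_rw [hpt]
    rw [Finset.sum_add_distrib, ← Finset.mul_sum]
    congr 1
    rw [Fintype.sum_prod_type]
    simp
  have part1 : ∫ x : Fin N → ℝ,
      ‖∑ n, (l n : ℂ) * Complex.exp (Complex.I * x n)‖ ^ 2
        ∂(Measure.pi fun _ => μ) =
      ∑ n, l n ^ 2 + c * ∑ p : Fin N × Fin N, (if p.1 ≠ p.2 then l p.1 * l p.2 else 0) := by
    rw [key, hsplit]
  refine ⟨part1, ?_⟩
  -- inequality
  have hc1 : c ≤ 1 := by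
    rw [hc, div_pow, div_le_one (by positivity), ← sq_abs (Real.sin _), ← sq_abs (π / 2 ^ b)]
    exact pow_le_pow_left₀ (abs_nonneg _) Real.abs_sin_le_abs 2
  have hsq : (0:ℝ) ≤ ∑ n, l n ^ 2 := Finset.sum_nonneg fun n _ => sq_nonneg _
  have hsum : (∑ n, l n) ^ 2 =
      ∑ n, l n ^ 2 + ∑ p : Fin N × Fin N, (if p.1 ≠ p.2 then l p.1 * l p.2 else 0) := by
    have hrow : ∀ n : Fin N, ∑ m, l n * l m =
        l n ^ 2 + ∑ m, (if n ≠ m then l n * l m else 0) := by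
      intro n
      have hpt : ∀ m : Fin N, l n * l m =
          (if n = m then l n ^ 2 else 0) + (if n ≠ m then l n * l m else 0) := by
        intro m; rcases eq_or_ne n m with h | h <;> simp [h, sq]
      rw [Finset.sum_congr rfl fun m _ => hpt m, Finset.sum_add_distrib]
      simp
    rw [sq, Finset.sum_mul_sum]
    simp_rw [hrow]
    rw [Finset.sum_add_distrib, Fintype.sum_prod_type]
  rw [part1, hsum]
  nlinarith [mul_nonneg (sub_nonneg.2 hc1) hsq]
end
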